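/- For every integer k ≥ 3 and every real number θ, define g(θ) = ((k+4)/(2(k+2)²))·sin((k+2)θ) − ((k+2)/(2k²))·sin(kθ), so that g′(θ) = ((k+4)/(2(k+2)))·cos((k+2)θ) − ((k+2)/(2k))·cos(kθ). Then 2·g(θ)·cos(2θ) − sin(2θ)·g′(θ) = −d⁻_{k+2}·e_{k+2}(θ) + (d⁻_k − d⁻_{k+2})·e_k(θ) + d⁻_k·e_{k−2}(θ). -/

import Mathlib

set_option maxHeartbeats 1000000


open Real

/-- The weighted basis function `e_j(θ) = sin((j+2)θ)/(j+2) − sin(jθ)/j`. -/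
noncomputable def eBasis (j : ℕ) (θ : ℝ) : ℝ :=
  sin (((j : ℝ) + 2) * θ) / ((j : ℝ) + 2) - sin ((j : ℝ) * θ) / (j : ℝ)

/-- The tridiagonal coefficient `d⁻_j = (j+2)²·(j−2)/(4j²)`. -/
noncomputable def dMinus (j : ℕ) : ℝ :=
  ((j : ℝ) + 2) ^ 2 * ((j : ℝ) - 2) / (4 * (j : ℝ) ^ 2)

lemma sin_mul_cos' (a b : ℝ) : sin a * cos b = (sin (a + b) + sin (a - b)) / 2 := by
  rw [sin_add, sin_sub]; ring

/-- Tridiagonal action of the linearized operator `L⁻` on the basis function `e_k`: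
with `g = e_k/2 − v_k`, one has
`{g, sin 2θ} = −d⁻_{k+2}·e_{k+2} + (d⁻_k − d⁻_{k+2})·e_k + d⁻_k·e_{k−2}`. -/
theorem lminus_eBasis (k : ℕ) (hk : 3 ≤ k) (θ : ℝ) :
    2 * (((k : ℝ) + 4) / (2 * ((k : ℝ) + 2) ^ 2) * sin (((k : ℝ) + 2) * θ) -
          ((k : ℝ) + 2) / (2 * (k : ℝ) ^ 2) * sin ((k : ℝ) * θ)) * cos (2 * θ) -
      sin (2 * θ) * (((k : ℝ) + 4) / (2 * ((k : ℝ) + 2)) * cos (((k : ℝ) + 2) * θ) -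
          ((k : ℝ) + 2) / (2 * (k : ℝ)) * cos ((k : ℝ) * θ)) =
    -(dMinus (k + 2)) * eBasis (k + 2) θ + (dMinus k - dMinus (k + 2)) * eBasis k θ +
      dMinus k * eBasis (k - 2) θ := by
  have hK : (3 : ℝ) ≤ (k : ℝ) := by exact_mod_cast hk
  have hsub : ((k - 2 : ℕ) : ℝ) = (k : ℝ) - 2 := by
    have : (2 : ℕ) ≤ k := by omega
    push_cast [this]; ring
  simp only [eBasis, dMinus, hsub]
  push_cast
  set K : ℝ := (k : ℝ) with hKdef
  have h0 : K ≠ 0 := by nlinarith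
  have h2 : K + 2 ≠ 0 := by nlinarith
  have h4 : K + 4 ≠ 0 := by nlinarith
  have hm2 : K - 2 ≠ 0 := by nlinarith
  have e1 : sin ((K + 2) * θ) * cos (2 * θ) =
      (sin ((K + 4) * θ) + sin (K * θ)) / 2 := by
    rw [sin_mul_cos', show (K + 2) * θ + 2 * θ = (K + 4) * θ by ring,
      show (K + 2) * θ - 2 * θ = K * θ by ring]
  have e2 : sin (K * θ) * cos (2 * θ) =
      (sin ((K + 2) * θ) + sin ((K - 2) * θ)) / 2 := by
    rw [sin_mul_cos', show K * θ + 2 * θ = (K + 2) * θ by ring,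
      show K * θ - 2 * θ = (K - 2) * θ by ring]
  have e3 : sin (2 * θ) * cos ((K + 2) * θ) =
      (sin ((K + 4) * θ) - sin (K * θ)) / 2 := by
    rw [sin_mul_cos', show 2 * θ + (K + 2) * θ = (K + 4) * θ by ring,
      show 2 * θ - (K + 2) * θ = -(K * θ) by ring, sin_neg]
    ring
  have e4 : sin (2 * θ) * cos (K * θ) =
      (sin ((K + 2) * θ) - sin ((K - 2) * θ)) / 2 := by
    rw [sin_mul_cos', show 2 * θ + K * θ = (K + 2) * θ by ring,
      show 2 * θ - K * θ = -((K - 2) * θ) by ring, sin_neg]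
    ring
  have expand : ((K - 2) + 2) * θ = K * θ := by ring
  rw [expand]
  linear_combination (norm := skip) ((K + 4) / ((K + 2) ^ 2)) * e1
    - ((K + 2) / K ^ 2) * e2 - ((K + 4) / (2 * (K + 2))) * e3
    + ((K + 2) / (2 * K)) * e4
  field_simp
  linear_combination sin (K * θ) * (256 + 512 * K + 320 * K ^ 2 - 80 * K ^ 4 - 32 * K ^ 5 - 4 * K ^ 6) * mul_inv_cancel₀ h0
    + (32 * K ^ 4 + 24 * K ^ 5 + 4 * K ^ 6) * congrArg sin (show θ * (K + 2 + 2) = (K + 4) * θ by ring)
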